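/- Let T be a tree of order n ≥ 2. Then PC(T) = n if and only if T is a star K_{1,n−1}. -/

import Mathlib

namespace PCPaper

variable {V : Type*}

/-- `S` is a dominating set of `G`. -/
def IsDomSet (G : SimpleGraph V) (S : Set V) : Prop :=
  ∀ v : V, v ∈ S ∨ ∃ u ∈ S, G.Adj u v

/-- `S` is a paired dominating set of `G`: a dominating set such that the subgraph of `G`
induced by `S` contains a perfect matching (a matching whose vertex set is exactly `S`). -/
def IsPairedDomSet (G : SimpleGraph V) (S : Set V) : Prop :=
  IsDomSet G S ∧ ∃ M : G.Subgraph, M.verts = S ∧ M.IsMatching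

/-- Disjoint sets `A`, `B`, neither a paired dominating set, whose union is one. -/
def PairedCoalition (G : SimpleGraph V) (A B : Set V) : Prop :=
  Disjoint A B ∧ ¬ IsPairedDomSet G A ∧ ¬ IsPairedDomSet G B ∧ IsPairedDomSet G (A ∪ B)

variable [Fintype V] [DecidableEq V]

/-- `π` is a paired coalition partition of `G`: no part is a paired dominating set and every
part forms a paired coalition with some other part. -/
def IsPCPartition (G : SimpleGraph V) (π : Finpartition (Finset.univ : Finset V)) : Prop :=
  ∀ A ∈ π.parts, ¬ IsPairedDomSet G (A : Set V) ∧
    ∃ B ∈ π.parts, B ≠ A ∧ PairedCoalition G (A : Set V) (B : Set V)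

/-- The paired coalition number: the maximum number of parts of a pc-partition of `G`,
and `0` if `G` admits no pc-partition. -/
noncomputable def pcNumber (G : SimpleGraph V) : ℕ :=
  sSup {k | ∃ π : Finpartition (Finset.univ : Finset V), IsPCPartition G π ∧ π.parts.card = k}

/-- The paired coalition graph of a partition `π` of `G`: vertices are the parts of `π`,
two parts being adjacent iff they form a paired coalition in `G`. -/
def PCG (G : SimpleGraph V) (π : Finpartition (Finset.univ : Finset V)) :
    SimpleGraph {A : Finset V // A ∈ π.parts} where
  Adj A B := PairedCoalition G ((A : Finset V) : Set V) ((B : Finset V) : Set V)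
  symm := by
    constructor
    rintro A B ⟨h1, h2, h3, h4⟩
    exact ⟨h1.symm, h3, h2, by rwa [Set.union_comm]⟩
  loopless := by
    constructor
    rintro A ⟨h1, h2, h3, h4⟩
    exact h2 (by rwa [Set.union_self] at h4)

end PCPaper


section StmtAux
open PCPaper

variable {V : Type*}

lemma not_pds_singleton (G : SimpleGraph V) (v : V) : ¬ IsPairedDomSet G {v} := by
  rintro ⟨-, M, hMv, hM⟩
  obtain ⟨w, hw, -⟩ := hM (show v ∈ M.verts by rw [hMv]; rfl)
  have hwv : w = v := by have := hw.snd_mem; rw [hMv] at this; exact this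
  exact G.loopless.irrefl v (by simpa [hwv] using M.adj_sub hw)

lemma adj_of_pds_pair {G : SimpleGraph V} {v w : V} (hvw : v ≠ w)
    (h : IsPairedDomSet G {v, w}) : G.Adj v w := by
  obtain ⟨-, M, hMv, hM⟩ := h
  obtain ⟨x, hx, -⟩ := hM (show v ∈ M.verts by rw [hMv]; exact Set.mem_insert _ _)
  have hxm : x ∈ ({v, w} : Set V) := by rw [← hMv]; exact hx.snd_mem
  have hGvx : G.Adj v x := M.adj_sub hx
  rcases hxm with rfl | rfl
  · exact absurd hGvx (G.loopless.irrefl _)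
  · exact hGvx

lemma pds_pair_of_adj {G : SimpleGraph V} {v w : V} (h : G.Adj v w)
    (hd : IsDomSet G {v, w}) : IsPairedDomSet G {v, w} :=
  ⟨hd, G.subgraphOfAdj h, rfl,
    SimpleGraph.Subgraph.IsMatching.subgraphOfAdj h⟩

lemma no_triangle {G : SimpleGraph V} (hG : G.IsAcyclic) {a b c : V}
    (h1 : G.Adj a b) (h2 : G.Adj b c) (h3 : G.Adj a c) : False := by
  rw [SimpleGraph.isAcyclic_iff_path_unique] at hG
  have hp1 : (SimpleGraph.Walk.cons h1 (SimpleGraph.Walk.cons h2 SimpleGraph.Walk.nil)).IsPath := by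
    simp [SimpleGraph.Walk.isPath_def, h1.ne, h2.ne, h3.ne]
  have hp2 : (SimpleGraph.Walk.cons h3 SimpleGraph.Walk.nil).IsPath := by
    simp [SimpleGraph.Walk.isPath_def, h3.ne]
  have := hG ⟨_, hp1⟩ ⟨_, hp2⟩
  have := congrArg (fun p : G.Path a c => p.1.support) this
  simp at this

lemma no_square {G : SimpleGraph V} (hG : G.IsAcyclic) {a b c d : V}
    (hac : a ≠ c) (hbd : b ≠ d)
    (h1 : G.Adj a b) (h2 : G.Adj b c) (h3 : G.Adj c d) (h4 : G.Adj d a) : False := by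
  rw [SimpleGraph.isAcyclic_iff_path_unique] at hG
  have hp1 : (SimpleGraph.Walk.cons h1 (SimpleGraph.Walk.cons h2 SimpleGraph.Walk.nil)).IsPath := by
    simp [SimpleGraph.Walk.isPath_def, h1.ne, h2.ne, hac]
  have hp2 : (SimpleGraph.Walk.cons h4.symm (SimpleGraph.Walk.cons h3.symm SimpleGraph.Walk.nil)).IsPath := by
    simp [SimpleGraph.Walk.isPath_def, h4.ne', h3.ne', hac]
  have := hG ⟨_, hp1⟩ ⟨_, hp2⟩
  have := congrArg (fun p : G.Path a c => p.1.support) this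
  simp [hbd] at this

lemma exists_universal [Nonempty V] {G : SimpleGraph V} (hG : G.IsAcyclic)
    (H : ∀ v : V, ∃ w, G.Adj v w ∧ IsDomSet G {v, w}) :
    ∃ u : V, ∀ x, x ≠ u → G.Adj u x := by
  obtain ⟨v⟩ := ‹Nonempty V›
  obtain ⟨w, hvw, hdom⟩ := H v
  by_cases hwU : ∀ x, x ≠ w → G.Adj w x
  · exact ⟨w, hwU⟩
  push_neg at hwU
  obtain ⟨a, haw, hnaw⟩ := hwU
  have hav' : a ≠ v := fun h => hnaw (h ▸ hvw.symm)
  have hva : G.Adj v a := by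
    rcases hdom a with h | ⟨u, hu, hadj⟩
    · rcases h with h | h
      · exact absurd h hav'
      · exact absurd h haw
    · rcases hu with rfl | rfl
      · exact hadj
      · exact absurd hadj hnaw
  obtain ⟨b, hab, hdom'⟩ := H a
  have hbv : b = v := by
    by_contra hbv
    have hbw : b ≠ w := fun h => hnaw (h ▸ hab).symm
    have hwb : G.Adj b w := by
      rcases hdom' w with h | ⟨u, hu, hadj⟩
      · rcases h with h | h
        · exact absurd h.symm haw
        · exact absurd h.symm hbw
      · rcases hu with rfl | rfl
        · exact absurd hadj.symm hnaw
        · exact hadj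
    exact no_square hG (Ne.symm hbv) (Ne.symm haw) hvw hwb.symm hab.symm hva.symm
  rw [hbv] at hab hdom'
  refine ⟨v, fun c hcv => ?_⟩
  by_contra hnvc
  have hcw : c ≠ w := fun h => hnvc (h ▸ hvw)
  have hca : c ≠ a := fun h => hnvc (h ▸ hva)
  have hwc : G.Adj w c := by
    rcases hdom c with h | ⟨u, hu, hadj⟩
    · rcases h with h | h
      · exact absurd h hcv
      · exact absurd h hcw
    · rcases hu with rfl | rfl
      · exact absurd hadj hnvc
      · exact hadj
  have hac : G.Adj a c := by
    rcases hdom' c with h | ⟨u, hu, hadj⟩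
    · rcases h with h | h
      · exact absurd h hca
      · exact absurd h hcv
    · rcases hu with rfl | rfl
      · exact hadj
      · exact absurd hadj hnvc
  exact no_square hG (Ne.symm hcv) (Ne.symm haw) hvw hwc hac.symm hva.symm

variable [Fintype V] [DecidableEq V]

set_option linter.unusedSectionVars false

lemma star_iso {G : SimpleGraph V} (hG : G.IsAcyclic) {u : V}
    (hu : ∀ x, x ≠ u → G.Adj u x) {n : ℕ} (hn : Fintype.card V = n) :
    Nonempty (G ≃g completeBipartiteGraph (Fin 1) (Fin (n - 1))) := by
  have hadj : ∀ x y : V, G.Adj x y ↔ (x = u ∧ y ≠ u) ∨ (y = u ∧ x ≠ u) := by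
    intro x y
    constructor
    · intro h
      by_cases hx : x = u
      · exact Or.inl ⟨hx, fun hy => G.loopless.irrefl u (by rw [hx, hy] at h; exact h)⟩
      · by_cases hy : y = u
        · exact Or.inr ⟨hy, hx⟩
        · exact absurd (no_triangle hG (hu x hx) h (hu y hy)) not_false
    · rintro (⟨rfl, hy⟩ | ⟨rfl, hx⟩)
      · exact hu y hy
      · exact (hu x hx).symm
  have c1 : Fintype.card {x : V // x = u} = 1 := Fintype.card_subtype_eq u
  have c2 : Fintype.card {x : V // ¬ x = u} = n - 1 := by
    rw [Fintype.card_subtype_compl, c1, hn]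
  obtain ⟨eL⟩ := Fintype.card_eq.mp (c1.trans (Fintype.card_fin 1).symm)
  obtain ⟨eR⟩ := Fintype.card_eq.mp (c2.trans (Fintype.card_fin (n-1)).symm)
  refine ⟨⟨(Equiv.sumCompl (· = u)).symm.trans (Equiv.sumCongr eL eR), ?_⟩⟩
  intro x y
  simp only [Equiv.trans_apply, completeBipartiteGraph_adj, Equiv.sumCongr_apply]
  rw [hadj x y]
  by_cases hx : x = u <;> by_cases hy : y = u
  · rw [Equiv.sumCompl_symm_apply_of_pos (p := (· = u)) hx, Equiv.sumCompl_symm_apply_of_pos (p := (· = u)) hy]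
    simp [hx, hy]
  · rw [Equiv.sumCompl_symm_apply_of_pos (p := (· = u)) hx, Equiv.sumCompl_symm_apply_of_neg (p := (· = u)) hy]
    simp [hx, hy]
  · rw [Equiv.sumCompl_symm_apply_of_neg (p := (· = u)) hx, Equiv.sumCompl_symm_apply_of_pos (p := (· = u)) hy]
    simp [hx, hy]
  · rw [Equiv.sumCompl_symm_apply_of_neg (p := (· = u)) hx, Equiv.sumCompl_symm_apply_of_neg (p := (· = u)) hy]
    simp [hx, hy]

lemma universal_of_iso {G : SimpleGraph V} {n : ℕ}
    (f : G ≃g completeBipartiteGraph (Fin 1) (Fin (n - 1))) :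
    ∃ u : V, ∀ x, x ≠ u → G.Adj u x := by
  refine ⟨f.symm (Sum.inl 0), fun x hx => ?_⟩
  have hfx : f x ≠ Sum.inl 0 := by
    intro h
    apply hx
    have := congrArg f.symm h
    simpa using this
  rw [← f.map_rel_iff]
  simp only [RelIso.apply_symm_apply]
  rcases hfy : f x with y | y
  · exact absurd (by rw [Fin.fin_one_eq_zero y] at hfy; exact hfy) hfx
  · simp [completeBipartiteGraph_adj]

lemma pc_of_universal {G : SimpleGraph V} {u : V} (hu : ∀ x, x ≠ u → G.Adj u x)
    {n : ℕ} (hn : Fintype.card V = n) (h2 : 2 ≤ n) : pcNumber G = n := by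
  set S := {k | ∃ π : Finpartition (Finset.univ : Finset V),
    IsPCPartition G π ∧ π.parts.card = k} with hS
  have hbound : ∀ k ∈ S, k ≤ n := by
    rintro k ⟨π, -, rfl⟩
    calc π.parts.card ≤ (Finset.univ : Finset V).card := π.card_parts_le_card
    _ = n := by simpa using hn
  have hdomp : ∀ v : V, v ≠ u → IsPairedDomSet G {v, u} := by
    intro v hv
    refine pds_pair_of_adj (hu v hv).symm ?_
    intro x
    by_cases hx : x = u
    · exact Or.inl (by rw [hx]; exact Set.mem_insert_of_mem _ rfl)
    · exact Or.inr ⟨u, Set.mem_insert_of_mem _ rfl, hu x hx⟩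
  have hsingle : ∀ v : V, ({v} : Finset V) ∈ (⊥ : Finpartition (Finset.univ : Finset V)).parts :=
    fun v => Finpartition.mem_bot_iff.mpr ⟨v, Finset.mem_univ v, rfl⟩
  have hmem : n ∈ S := by
    refine ⟨⊥, ?_, by rw [Finpartition.card_bot]; simpa using hn⟩
    intro A hA
    rw [Finpartition.mem_bot_iff] at hA
    obtain ⟨v, -, rfl⟩ := hA
    refine ⟨by simpa using not_pds_singleton G v, ?_⟩
    by_cases hv : v = u
    · obtain ⟨w, hw⟩ := Fintype.exists_ne_of_one_lt_card (by omega) u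
      refine ⟨{w}, hsingle w, fun h => hw (by have := Finset.singleton_injective h; rw [this, hv]), ?_⟩
      refine ⟨?_, by simpa using not_pds_singleton G v, by simpa using not_pds_singleton G w, ?_⟩
      · simp only [Finset.coe_singleton]
        exact Set.disjoint_singleton.mpr (fun h => hw (by rw [← h, hv]))
      · rw [Finset.coe_singleton, Finset.coe_singleton, Set.singleton_union, hv, Set.pair_comm]
        exact hdomp w hw
    · refine ⟨{u}, hsingle u, fun h => hv (Finset.singleton_injective h).symm, ?_⟩
      refine ⟨?_, by simpa using not_pds_singleton G v, by simpa using not_pds_singleton G u, ?_⟩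
      · simp only [Finset.coe_singleton]
        exact Set.disjoint_singleton.mpr hv
      · rw [Finset.coe_singleton, Finset.coe_singleton, Set.singleton_union]
        exact hdomp v hv
  exact le_antisymm (csSup_le ⟨n, hmem⟩ hbound) (le_csSup ⟨n, hbound⟩ hmem)

lemma pairs_of_pc {G : SimpleGraph V} {n : ℕ} (hn : Fintype.card V = n) (h2 : 2 ≤ n)
    (hpc : pcNumber G = n) : ∀ v : V, ∃ w, G.Adj v w ∧ IsDomSet G {v, w} := by
  set S := {k | ∃ π : Finpartition (Finset.univ : Finset V),
    IsPCPartition G π ∧ π.parts.card = k} with hS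
  have hbdd : BddAbove S := by
    refine ⟨n, ?_⟩
    rintro k ⟨π, -, rfl⟩
    calc π.parts.card ≤ (Finset.univ : Finset V).card := π.card_parts_le_card
    _ = n := by simpa using hn
  have hne : S.Nonempty := by
    by_contra h
    rw [Set.not_nonempty_iff_eq_empty] at h
    rw [pcNumber, ← hS, h, csSup_empty] at hpc
    simp at hpc
    omega
  have hmem := Nat.sSup_mem hne hbdd
  rw [show sSup S = pcNumber G from rfl, hpc] at hmem
  obtain ⟨π, hπ, hcard⟩ := hmem
  have hsum : ∑ A ∈ π.parts, A.card = n := by rw [π.sum_card_parts]; simpa using hn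
  have h1 : ∀ A ∈ π.parts, (fun _ => 1) A ≤ A.card :=
    fun A hA => Finset.card_pos.mpr (π.nonempty_of_mem_parts hA)
  have hone : ∀ A ∈ π.parts, A.card = 1 := by
    intro A hA
    exact ((Finset.sum_eq_sum_iff_of_le h1).mp (by rw [hsum]; simp [hcard]) A hA).symm
  intro v
  obtain ⟨A, hA, hvA⟩ := π.exists_mem (Finset.mem_univ v)
  have hAv : A = {v} := by
    obtain ⟨a, ha⟩ := Finset.card_eq_one.mp (hone A hA)
    rw [ha] at hvA ⊢
    rw [Finset.mem_singleton] at hvA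
    rw [hvA]
  rw [hAv] at hA
  obtain ⟨-, B, hB, hBA, hco⟩ := hπ _ hA
  obtain ⟨w, hw⟩ := Finset.card_eq_one.mp (hone B hB)
  rw [hw] at hBA hco
  have hvw : v ≠ w := fun h => hBA (by rw [h])
  obtain ⟨-, -, -, hpds⟩ := hco
  have hP : IsPairedDomSet G {v, w} := by
    rw [Finset.coe_singleton, Finset.coe_singleton, Set.singleton_union] at hpds
    exact hpds
  exact ⟨w, adj_of_pds_pair hvw hP, hP.1⟩

end StmtAux

open PCPaper in
/-- For a tree `T` of order `n ≥ 2`, `PC(T) = n` iff `T` is a star `K_{1,n-1}`. -/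
theorem stmt_14 {V : Type*} [Fintype V] [DecidableEq V] (T : SimpleGraph V)
    (hT : T.IsTree) (n : ℕ) (hn : Fintype.card V = n) (h2 : 2 ≤ n) :
    pcNumber T = n ↔ Nonempty (T ≃g completeBipartiteGraph (Fin 1) (Fin (n - 1))) := by
  constructor
  · intro h
    have hne : Nonempty V := by
      rw [← Fintype.card_pos_iff]
      omega
    obtain ⟨u, hu⟩ := exists_universal hT.IsAcyclic (pairs_of_pc hn h2 h)
    exact star_iso hT.IsAcyclic hu hn
  · rintro ⟨f⟩
    obtain ⟨u, hu⟩ := universal_of_iso f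
    exact pc_of_universal hu hn h2
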